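/- Let ℓ ∈ ℕ₀, 1 ≤ i ≤ ℓ and 1 ≤ k ≤ 2^ℓ. Then there is exactly one j* ∈ {1, …, 2^{i-1}} with Δ^{(i,j*)}_{k,ℓ} ≠ 0, namely j* = ⌈k·2^{i-1-ℓ}⌉; moreover (Δ^{(i,j*)}_{k,ℓ})² = 2^{i-1} · 2^{-2ℓ}, and Δ^{(i,j)}_{k,ℓ} = 0 for all j ≠ j*. In addition Δ^{(0,1)}_{k,ℓ} = 2^{-ℓ}. -/

import Mathlib

open MeasureTheory

/-- The Haar functions on `[0,1]`: `haar 0 j = 1` (only `j = 1` is used), and for `i ≥ 1`,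
`haar i j = 2^((i-1)/2) * (1_{I^{(i,j)}} - 1_{J^{(i,j)}})`. -/
noncomputable def haar : ℕ → ℕ → ℝ → ℝ
  | 0, _, _ => 1
  | (i + 1), j, t =>
      2 ^ ((i : ℝ) / 2) *
        ((Set.Ico (((j : ℝ) - 1) / 2 ^ i) (((j : ℝ) - 1 / 2) / 2 ^ i)).indicator
            (fun _ => (1 : ℝ)) t
          - (Set.Ico (((j : ℝ) - 1 / 2) / 2 ^ i) ((j : ℝ) / 2 ^ i)).indicator
            (fun _ => (1 : ℝ)) t)

/-- The Schauder functions `s^{(i,j)}(t) = ∫_0^t h^{(i,j)}(u) du`. -/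
noncomputable def schauder (i j : ℕ) (t : ℝ) : ℝ := ∫ u in (0 : ℝ)..t, haar i j u

/-- The Schauder increments `Δ^{(i,j)}_{k,ℓ} = s^{(i,j)}(k/2^ℓ) - s^{(i,j)}((k-1)/2^ℓ)`. -/
noncomputable def schauderInc (i j k ℓ : ℕ) : ℝ :=
  schauder i j ((k : ℝ) / 2 ^ ℓ) - schauder i j (((k : ℝ) - 1) / 2 ^ ℓ)

lemma indicator_intervalIntegrable (c d x y : ℝ) :
    IntervalIntegrable ((Set.Ico c d).indicator fun _ => (1:ℝ)) volume x y := by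
  rw [intervalIntegrable_iff]
  exact ((integrableOn_const_iff (by simp)).mpr (Or.inr measure_Ioc_lt_top)).indicator measurableSet_Ico

lemma vol_full {a b c d : ℝ} (hab : a ≤ b) (h1 : c ≤ a) (h2 : b ≤ d) :
    (volume (Set.Ioc a b ∩ Set.Ico c d)).toReal = b - a := by
  have hsub1 : Set.Ioo a b ⊆ Set.Ioc a b ∩ Set.Ico c d := fun x hx =>
    ⟨⟨hx.1, hx.2.le⟩, ⟨h1.trans hx.1.le, hx.2.trans_le h2⟩⟩
  have hsub2 : Set.Ioc a b ∩ Set.Ico c d ⊆ Set.Ioc a b := Set.inter_subset_left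
  have e : volume (Set.Ioc a b ∩ Set.Ico c d) = ENNReal.ofReal (b - a) := by
    refine le_antisymm ?_ ?_
    · simpa [Real.volume_Ioc] using measure_mono (μ := volume) hsub2
    · simpa [Real.volume_Ioo] using measure_mono (μ := volume) hsub1
  rw [e, ENNReal.toReal_ofReal (by linarith)]

lemma vol_null_left {a b c d : ℝ} (h : b ≤ c) :
    (volume (Set.Ioc a b ∩ Set.Ico c d)).toReal = 0 := by
  have : Set.Ioc a b ∩ Set.Ico c d ⊆ {b} := fun x hx => le_antisymm hx.1.2 (h.trans hx.2.1)
  simp [measure_mono_null this (by simp : volume ({b} : Set ℝ) = 0)]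

lemma vol_null_right {a b c d : ℝ} (h : d ≤ a) :
    (volume (Set.Ioc a b ∩ Set.Ico c d)).toReal = 0 := by
  have : Set.Ioc a b ∩ Set.Ico c d ⊆ ({a} : Set ℝ) := fun x hx =>
    absurd (hx.2.2.trans_le (h.trans hx.1.1.le)) (lt_irrefl x)
  simp [measure_mono_null this (by simp : volume ({a} : Set ℝ) = 0)]

lemma integral_indicator_Ico {a b : ℝ} (hab : a ≤ b) (c d : ℝ) :
    ∫ u in a..b, (Set.Ico c d).indicator (fun _ => (1:ℝ)) u
      = (volume (Set.Ioc a b ∩ Set.Ico c d)).toReal := by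
  rw [intervalIntegral.integral_of_le hab,
    setIntegral_indicator measurableSet_Ico, setIntegral_const, smul_eq_mul, mul_one]
  rfl

lemma haar_intervalIntegrable (i j : ℕ) (x y : ℝ) :
    IntervalIntegrable (haar i j) volume x y := by
  cases i with
  | zero => exact intervalIntegrable_const (c := (1:ℝ))
  | succ m =>
    have e : haar (m + 1) j = fun t =>
        2 ^ ((m : ℝ) / 2) *
          ((Set.Ico (((j : ℝ) - 1) / 2 ^ m) (((j : ℝ) - 1 / 2) / 2 ^ m)).indicator
              (fun _ => (1 : ℝ)) t
            - (Set.Ico (((j : ℝ) - 1 / 2) / 2 ^ m) ((j : ℝ) / 2 ^ m)).indicator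
              (fun _ => (1 : ℝ)) t) := by funext t; rfl
    rw [e]
    exact ((indicator_intervalIntegrable _ _ x y).sub
      (indicator_intervalIntegrable _ _ x y)).const_mul _

lemma schauderInc_eq_integral (i j k ℓ : ℕ) :
    schauderInc i j k ℓ = ∫ u in (((k : ℝ) - 1) / 2 ^ ℓ)..((k : ℝ) / 2 ^ ℓ), haar i j u := by
  rw [schauderInc, schauder, schauder,
    intervalIntegral.integral_interval_sub_left (haar_intervalIntegrable i j _ _)
      (haar_intervalIntegrable i j _ _)]

lemma schauderInc_succ (m j k ℓ : ℕ) :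
    schauderInc (m+1) j k ℓ = 2 ^ ((m : ℝ) / 2) *
      ((volume (Set.Ioc (((k : ℝ) - 1) / 2 ^ ℓ) ((k : ℝ) / 2 ^ ℓ)
          ∩ Set.Ico (((j : ℝ) - 1) / 2 ^ m) (((j : ℝ) - 1 / 2) / 2 ^ m))).toReal
       - (volume (Set.Ioc (((k : ℝ) - 1) / 2 ^ ℓ) ((k : ℝ) / 2 ^ ℓ)
          ∩ Set.Ico (((j : ℝ) - 1 / 2) / 2 ^ m) ((j : ℝ) / 2 ^ m))).toReal) := by
  have hab : ((k : ℝ) - 1) / 2 ^ ℓ ≤ (k : ℝ) / 2 ^ ℓ := by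
    apply div_le_div_of_nonneg_right ?_ (by positivity) |>.trans_eq rfl
    · linarith
  rw [schauderInc_eq_integral]
  show (∫ u in (((k : ℝ) - 1) / 2 ^ ℓ)..((k : ℝ) / 2 ^ ℓ),
      2 ^ ((m : ℝ) / 2) * ((Set.Ico (((j : ℝ) - 1) / 2 ^ m) (((j : ℝ) - 1 / 2) / 2 ^ m)).indicator
        (fun _ => (1 : ℝ)) u - (Set.Ico (((j : ℝ) - 1 / 2) / 2 ^ m) ((j : ℝ) / 2 ^ m)).indicator
        (fun _ => (1 : ℝ)) u)) = _
  rw [intervalIntegral.integral_const_mul,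
    intervalIntegral.integral_sub (indicator_intervalIntegrable _ _ _ _)
      (indicator_intervalIntegrable _ _ _ _),
    integral_indicator_Ico hab, integral_indicator_Ico hab]

lemma div_le_div_pow {x y : ℝ} {s t : ℕ} (h : x * 2 ^ t ≤ y * 2 ^ s) :
    x / 2 ^ s ≤ y / 2 ^ t := by
  rw [div_le_div_iff₀ (by positivity) (by positivity)]; exact h

lemma sq_helper (m ℓ : ℕ) :
    ((2:ℝ) ^ ((m:ℝ)/2) * ((2:ℝ) ^ ℓ)⁻¹) ^ 2 = 2 ^ m * ((2:ℝ) ^ (2 * ℓ))⁻¹ := by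
  have h2 : ((2:ℝ) ^ ((m:ℝ)/2)) ^ 2 = 2 ^ m := by
    rw [← Real.rpow_natCast ((2:ℝ) ^ ((m:ℝ)/2)) 2, ← Real.rpow_mul (by norm_num : (0:ℝ) ≤ 2),
      show ((m:ℝ)/2 * ((2:ℕ):ℝ)) = ((m:ℕ):ℝ) from by push_cast; ring, Real.rpow_natCast]
  rw [mul_pow, h2, ← inv_pow, ← pow_mul, mul_comm ℓ 2, inv_pow]

/-- For `1 ≤ i ≤ ℓ` there is exactly one `j* = ⌈k·2^{i-1-ℓ}⌉` with a nonzero Schauder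
increment, its square equals `2^{i-1}·2^{-2ℓ}`, and `Δ^{(0,1)}_{k,ℓ} = 2^{-ℓ}`. -/
theorem schauderInc_support (ℓ i k : ℕ) (hi1 : 1 ≤ i) (hi2 : i ≤ ℓ)
    (hk1 : 1 ≤ k) (hk2 : k ≤ 2 ^ ℓ) :
    ∃ jstar : ℕ, jstar = ⌈(k : ℝ) * 2 ^ (i - 1) / 2 ^ ℓ⌉₊ ∧
      1 ≤ jstar ∧ jstar ≤ 2 ^ (i - 1) ∧
      schauderInc i jstar k ℓ ≠ 0 ∧
      schauderInc i jstar k ℓ ^ 2 = 2 ^ (i - 1) * ((2 : ℝ) ^ (2 * ℓ))⁻¹ ∧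
      (∀ j : ℕ, 1 ≤ j → j ≤ 2 ^ (i - 1) → j ≠ jstar → schauderInc i j k ℓ = 0) ∧
      schauderInc 0 1 k ℓ = ((2 : ℝ) ^ ℓ)⁻¹ := by
  obtain ⟨m, rfl⟩ : ∃ m, i = m + 1 := ⟨i - 1, by omega⟩
  obtain ⟨L, rfl⟩ : ∃ L, ℓ = m + 1 + L := ⟨ℓ - (m + 1), by omega⟩
  simp only [Nat.add_sub_cancel]
  -- natural number facts
  set q := (k - 1) / 2 ^ (L + 1) with hq
  set p := (k - 1) / 2 ^ L with hp
  have h2L : (0:ℕ) < 2 ^ L := pow_pos (by norm_num) _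
  have h2L1 : (0:ℕ) < 2 ^ (L + 1) := pow_pos (by norm_num) _
  have hq1 : q * 2 ^ (L + 1) ≤ k - 1 := Nat.div_mul_le_self _ _
  have hq2 : k ≤ (q + 1) * 2 ^ (L + 1) := by
    have h1 := Nat.div_add_mod (k - 1) (2 ^ (L + 1))
    rw [← hq] at h1
    have h2 := Nat.mod_lt (k - 1) h2L1
    have h3 : (q + 1) * 2 ^ (L + 1) = 2 ^ (L + 1) * q + 2 ^ (L + 1) := by ring
    omega
  have hp1 : p * 2 ^ L ≤ k - 1 := Nat.div_mul_le_self _ _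
  have hp2 : k ≤ (p + 1) * 2 ^ L := by
    have h1 := Nat.div_add_mod (k - 1) (2 ^ L)
    rw [← hp] at h1
    have h2 := Nat.mod_lt (k - 1) h2L
    have h3 : (p + 1) * 2 ^ L = 2 ^ L * p + 2 ^ L := by ring
    omega
  have hqp : q = p / 2 := by
    rw [hq, hp, Nat.div_div_eq_div_mul, ← pow_succ]
  have hpar : p = 2 * q ∨ p = 2 * q + 1 := by
    have h1 := Nat.div_add_mod p 2
    rw [← hqp] at h1
    omega
  have hjle : q + 1 ≤ 2 ^ m := by
    have hk' : k - 1 < 2 ^ m * 2 ^ (L + 1) := by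
      have h4 : 2 ^ (m + 1 + L) = 2 ^ m * 2 ^ (L + 1) := by ring
      omega
    have := (Nat.div_lt_iff_lt_mul h2L1).mpr hk'
    omega
  -- real casts
  have hKcast : ((k - 1 : ℕ) : ℝ) = (k : ℝ) - 1 := by push_cast [hk1]; ring
  have R1 : (q : ℝ) * 2 ^ (L + 1) ≤ (k : ℝ) - 1 := by
    rw [← hKcast]; exact_mod_cast hq1
  have R2 : (k : ℝ) ≤ ((q : ℝ) + 1) * 2 ^ (L + 1) := by exact_mod_cast hq2
  have R3 : (p : ℝ) * 2 ^ L ≤ (k : ℝ) - 1 := by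
    rw [← hKcast]; exact_mod_cast hp1
  have R4 : (k : ℝ) ≤ ((p : ℝ) + 1) * 2 ^ L := by exact_mod_cast hp2
  have hm0 : (0:ℝ) < 2 ^ m := by positivity
  have hL0 : (0:ℝ) < 2 ^ L := by positivity
  have hL10 : (0:ℝ) < 2 ^ (L + 1) := by positivity
  have hab : ((k : ℝ) - 1) / 2 ^ (m + 1 + L) ≤ (k : ℝ) / 2 ^ (m + 1 + L) := by
    gcongr
    linarith
  have hba : (k : ℝ) / 2 ^ (m + 1 + L) - ((k : ℝ) - 1) / 2 ^ (m + 1 + L)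
      = ((2:ℝ) ^ (m + 1 + L))⁻¹ := by
    rw [div_sub_div_same, show (k:ℝ) - ((k:ℝ) - 1) = 1 from by ring, one_div]
  have hpow : (2:ℝ) ^ (m + 1 + L) = 2 ^ (L + 1) * 2 ^ m := by ring
  have hpow2 : (2:ℝ) ^ (m + 1 + L) = 2 * 2 ^ L * 2 ^ m := by ring
  -- ceiling identity
  have hceil : (q + 1 : ℕ) = ⌈(k : ℝ) * 2 ^ m / 2 ^ (m + 1 + L)⌉₊ := by
    have hrw : (k : ℝ) * 2 ^ m / 2 ^ (m + 1 + L) = (k : ℝ) / 2 ^ (L + 1) := by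
      rw [hpow]; field_simp
    rw [hrw]
    symm
    rw [Nat.ceil_eq_iff (Nat.succ_ne_zero q)]
    constructor
    · show ((q + 1 - 1 : ℕ) : ℝ) < _
      rw [show q + 1 - 1 = q from rfl, lt_div_iff₀ hL10]
      linarith
    · rw [div_le_iff₀ hL10]
      push_cast
      linarith
  -- uniqueness: other j give zero increment
  have huniq : ∀ j : ℕ, 1 ≤ j → j ≤ 2 ^ m → j ≠ q + 1 →
      schauderInc (m + 1) j k (m + 1 + L) = 0 := by
    intro j hj1 hj2 hjne
    rw [schauderInc_succ]
    rcases lt_or_gt_of_ne hjne with hlt | hgt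
    · -- j ≤ q : intervals end before a
      have hjq : (j : ℝ) ≤ (q : ℝ) := by exact_mod_cast Nat.lt_succ_iff.mp hlt
      have h1 : (j : ℝ) * 2 ^ (L + 1) ≤ (k : ℝ) - 1 := by
        have := mul_le_mul_of_nonneg_right hjq hL10.le
        linarith
      have hmul := mul_le_mul_of_nonneg_right h1 hm0.le
      have hd1 : ((j : ℝ) - 1 / 2) / 2 ^ m ≤ ((k : ℝ) - 1) / 2 ^ (m + 1 + L) := by
        apply div_le_div_pow
        rw [hpow]
        linarith [hmul, mul_pos hL10 hm0]
      have hd2 : (j : ℝ) / 2 ^ m ≤ ((k : ℝ) - 1) / 2 ^ (m + 1 + L) := by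
        apply div_le_div_pow
        rw [hpow]
        linarith [hmul]
      rw [vol_null_right hd1, vol_null_right hd2]
      ring
    · -- j ≥ q + 2 : intervals start after b
      have hjq : (q : ℝ) + 2 ≤ (j : ℝ) := by exact_mod_cast hgt
      have hmul := mul_le_mul_of_nonneg_right R2 hm0.le
      have hstep := mul_le_mul_of_nonneg_right
        (show (q:ℝ) + 1 ≤ (j:ℝ) - 1 from by linarith) (mul_pos hL10 hm0).le
      have hc1 : (k : ℝ) / 2 ^ (m + 1 + L) ≤ ((j : ℝ) - 1) / 2 ^ m := by
        apply div_le_div_pow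
        rw [hpow]
        linarith [hmul, hstep]
      have hc2 : (k : ℝ) / 2 ^ (m + 1 + L) ≤ ((j : ℝ) - 1 / 2) / 2 ^ m := by
        apply div_le_div_pow
        rw [hpow]
        linarith [hmul, hstep, mul_pos hL10 hm0]
      rw [vol_null_left hc1, vol_null_left hc2]
      ring
  -- value at jstar
  have hval : schauderInc (m + 1) (q + 1) k (m + 1 + L)
        = 2 ^ ((m:ℝ)/2) * ((2:ℝ) ^ (m + 1 + L))⁻¹ ∨
      schauderInc (m + 1) (q + 1) k (m + 1 + L)
        = -(2 ^ ((m:ℝ)/2) * ((2:ℝ) ^ (m + 1 + L))⁻¹) := by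
    rcases hpar with hpe | hpo
    · left
      have hpR : (p : ℝ) = 2 * (q : ℝ) := by exact_mod_cast hpe
      have hc : (((q + 1 : ℕ) : ℝ) - 1) / 2 ^ m ≤ ((k : ℝ) - 1) / 2 ^ (m + 1 + L) := by
        apply div_le_div_pow
        push_cast
        rw [hpow]
        have hmul := mul_le_mul_of_nonneg_right R1 hm0.le
        linarith [hmul]
      have hd : (k : ℝ) / 2 ^ (m + 1 + L) ≤ (((q + 1 : ℕ) : ℝ) - 1 / 2) / 2 ^ m := by
        apply div_le_div_pow
        push_cast
        rw [hpow2]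
        have h1 : (k:ℝ) ≤ (2 * (q:ℝ) + 1) * 2 ^ L := by rw [hpR] at R4; linarith
        have hmul := mul_le_mul_of_nonneg_right h1 hm0.le
        linarith [hmul]
      rw [schauderInc_succ, vol_full hab hc hd, vol_null_left hd, hba]
      ring
    · right
      have hpR : (p : ℝ) = 2 * (q : ℝ) + 1 := by exact_mod_cast hpo
      have hd' : (((q + 1 : ℕ) : ℝ) - 1 / 2) / 2 ^ m ≤ ((k : ℝ) - 1) / 2 ^ (m + 1 + L) := by
        apply div_le_div_pow
        push_cast
        rw [hpow2]
        have h1 : (2 * (q:ℝ) + 1) * 2 ^ L ≤ (k:ℝ) - 1 := by rw [hpR] at R3; linarith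
        have hmul := mul_le_mul_of_nonneg_right h1 hm0.le
        linarith [hmul]
      have hd2 : (k : ℝ) / 2 ^ (m + 1 + L) ≤ ((q + 1 : ℕ) : ℝ) / 2 ^ m := by
        apply div_le_div_pow
        push_cast
        rw [hpow]
        have hmul := mul_le_mul_of_nonneg_right R2 hm0.le
        linarith [hmul]
      rw [schauderInc_succ, vol_full hab hd' hd2, vol_null_right hd', hba]
      ring
  have hpos : (0:ℝ) < 2 ^ ((m:ℝ)/2) * ((2:ℝ) ^ (m + 1 + L))⁻¹ := by positivity
  refine ⟨q + 1, hceil, le_add_self, hjle, ?_, ?_, huniq, ?_⟩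
  · rcases hval with h | h <;> rw [h]
    · exact ne_of_gt hpos
    · exact ne_of_lt (by linarith)
  · rcases hval with h | h
    · rw [h]; exact sq_helper m (m + 1 + L)
    · rw [h, neg_sq]; exact sq_helper m (m + 1 + L)
  · rw [schauderInc_eq_integral]
    have e : haar 0 1 = fun _ : ℝ => (1:ℝ) := by funext t; rfl
    rw [e, intervalIntegral.integral_const, smul_eq_mul, mul_one, hba]
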